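/- Let ω ∈ [1/2, 3/2], γ > 0, with |ωl − j| ≥ γ/l for all positive integers l ≠ j, and ω irrational. For u = Σ_{l≥0, j≥1} u_{lj} cos(lt) sin(jx) with Σ u_{lj}²(l²+j²)³ < ∞, define w_{lj} = u_{lj}/(ω²l² − j²) for j ≠ l. Then there is an absolute constant C (independent of γ, ω, u) such that Σ_{l≥0, j≥1, j≠l} w_{lj}² (l⁶ + j⁶) ≤ (C/γ)² Σ_{l≥0,j≥1} u_{lj}²(l²+j²)³. More precisely, splitting the sum: for j ≥ 2ωl one has |ω²l² − j²| ≥ 3j²/4 so that part is bounded by C Σ u_{lj}² j², and for j < 2ωl, j ≠ l one uses |ω²l² − j²| ≥ γ/2 and j ≤ 3l to bound that part by (C/γ²) Σ u_{lj}² l⁶. -/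

import Mathlib

open Real

theorem stmt19 :
    ∃ C > (0:ℝ), ∀ γ ω : ℝ, 0 < γ → ω ∈ Set.Icc (1/2 : ℝ) (3/2) → Irrational ω →
      (∀ l j : ℕ, 1 ≤ l → 1 ≤ j → j ≠ l → γ / l ≤ |ω * l - j|) →
      ∀ u : ℕ × ℕ → ℝ, (∀ l : ℕ, u (l, 0) = 0) →
      Summable (fun q : ℕ × ℕ => (u q)^2 * ((q.1:ℝ)^2 + (q.2:ℝ)^2)^3) →
      (∑' q : ℕ × ℕ, if q.2 ≠ q.1 then
          (u q / (ω^2 * (q.1:ℝ)^2 - (q.2:ℝ)^2))^2 * ((q.1:ℝ)^6 + (q.2:ℝ)^6) else 0)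
        ≤ (C/γ)^2 * ∑' q : ℕ × ℕ, (u q)^2 * ((q.1:ℝ)^2 + (q.2:ℝ)^2)^3 := by
  refine ⟨2, by norm_num, ?_⟩
  intro γ ω hγ hω hirr hgap u hu0 hsum
  obtain ⟨hω1, hω2⟩ := hω
  -- γ ≤ 3/2
  have hγ32 : γ ≤ 3/2 := by
    have := hgap 1 2 le_rfl (by norm_num) (by norm_num)
    have h2 : |ω * (1:ℕ) - (2:ℕ)| = 2 - ω := by
      rw [abs_of_nonpos] <;> push_cast <;> nlinarith
    rw [h2] at this
    push_cast at this
    linarith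
  -- pointwise bound
  have key : ∀ q : ℕ × ℕ,
      (if q.2 ≠ q.1 then
        (u q / (ω^2 * (q.1:ℝ)^2 - (q.2:ℝ)^2))^2 * ((q.1:ℝ)^6 + (q.2:ℝ)^6) else 0)
      ≤ (2/γ)^2 * ((u q)^2 * ((q.1:ℝ)^2 + (q.2:ℝ)^2)^3) := by
    intro ⟨l, j⟩
    by_cases hjl : j ≠ l
    · rw [if_pos hjl]
      rcases Nat.eq_zero_or_pos j with hj0 | hj1
      · subst hj0
        rw [hu0 l]
        simp only [zero_div, ne_eq, zero_pow, OfNat.ofNat_ne_zero, not_false_eq_true, zero_mul]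
        positivity
      · -- j ≥ 1
        have hD : γ / 2 ≤ |ω^2 * (l:ℝ)^2 - (j:ℝ)^2| := by
          rcases Nat.eq_zero_or_pos l with hl0 | hl1
          · subst hl0
            have : (1:ℝ) ≤ (j:ℝ) := by exact_mod_cast hj1
            have h : |ω^2 * (0:ℕ) ^2 - (j:ℝ)^2| = (j:ℝ)^2 := by
              push_cast; rw [abs_of_nonpos] <;> nlinarith
            rw [h]
            nlinarith
          · have hgl := hgap l j hl1 hj1 hjl
            have hlpos : (0:ℝ) < (l:ℝ) := by exact_mod_cast hl1
            have hjpos : (0:ℝ) < (j:ℝ) := by exact_mod_cast hj1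
            have hfac : ω^2 * (l:ℝ)^2 - (j:ℝ)^2
                = (ω * l - j) * (ω * l + j) := by ring
            rw [hfac, abs_mul]
            rw [abs_of_nonneg (by nlinarith : (0:ℝ) ≤ ω * l + j)]
            have h3 : (l:ℝ) / 2 ≤ ω * l + j := by nlinarith
            calc γ / 2 = (γ / l) * (l / 2) := by field_simp
              _ ≤ |ω * (l:ℝ) - j| * (ω * l + j) := by
                  apply mul_le_mul hgl h3 (by positivity) (abs_nonneg _)
        have hDpos : (0:ℝ) < |ω^2 * (l:ℝ)^2 - (j:ℝ)^2| := lt_of_lt_of_le (by positivity) hD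
        have hD2 : (γ/2)^2 ≤ (ω^2 * (l:ℝ)^2 - (j:ℝ)^2)^2 := by
          rw [← sq_abs (ω^2 * (l:ℝ)^2 - (j:ℝ)^2)]
          exact pow_le_pow_left₀ (by positivity) hD 2
        have h1 : (u (l,j) / (ω^2 * (l:ℝ)^2 - (j:ℝ)^2))^2 ≤ (2/γ)^2 * (u (l,j))^2 := by
          rw [div_pow]
          have : (u (l,j))^2 / (ω^2 * (l:ℝ)^2 - (j:ℝ)^2)^2 ≤ (u (l,j))^2 / (γ/2)^2 :=
            div_le_div_of_nonneg_left (sq_nonneg _) (by positivity) hD2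
          calc (u (l,j))^2 / (ω^2 * (l:ℝ)^2 - (j:ℝ)^2)^2 ≤ (u (l,j))^2 / (γ/2)^2 := this
            _ = (2/γ)^2 * (u (l,j))^2 := by field_simp
        have h2 : ((l:ℝ)^6 + (j:ℝ)^6) ≤ ((l:ℝ)^2 + (j:ℝ)^2)^3 := by
          have hl : (0:ℝ) ≤ (l:ℝ) := Nat.cast_nonneg l
          have hj : (0:ℝ) ≤ (j:ℝ) := Nat.cast_nonneg j
          nlinarith [sq_nonneg ((l:ℝ)*j), sq_nonneg ((l:ℝ)^2*j), sq_nonneg ((l:ℝ)*(j:ℝ)^2)]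
        calc (u (l,j) / (ω^2 * (l:ℝ)^2 - (j:ℝ)^2))^2 * ((l:ℝ)^6 + (j:ℝ)^6)
            ≤ ((2/γ)^2 * (u (l,j))^2) * (((l:ℝ)^2 + (j:ℝ)^2)^3) := by
              apply mul_le_mul h1 h2 (by positivity) (by positivity)
          _ = (2/γ)^2 * ((u (l,j))^2 * ((l:ℝ)^2 + (j:ℝ)^2)^3) := by ring
    · rw [if_neg hjl]
      positivity
  have hsum2 : Summable (fun q : ℕ × ℕ => (2/γ)^2 * ((u q)^2 * ((q.1:ℝ)^2 + (q.2:ℝ)^2)^3)) :=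
    hsum.mul_left _
  have hsumL : Summable (fun q : ℕ × ℕ => if q.2 ≠ q.1 then
      (u q / (ω^2 * (q.1:ℝ)^2 - (q.2:ℝ)^2))^2 * ((q.1:ℝ)^6 + (q.2:ℝ)^6) else 0) := by
    apply Summable.of_nonneg_of_le _ key hsum2
    intro q
    by_cases h : q.2 ≠ q.1 <;> simp [h] <;> positivity
  calc (∑' q : ℕ × ℕ, if q.2 ≠ q.1 then
          (u q / (ω^2 * (q.1:ℝ)^2 - (q.2:ℝ)^2))^2 * ((q.1:ℝ)^6 + (q.2:ℝ)^6) else 0)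
      ≤ ∑' q : ℕ × ℕ, (2/γ)^2 * ((u q)^2 * ((q.1:ℝ)^2 + (q.2:ℝ)^2)^3) :=
        Summable.tsum_le_tsum key hsumL hsum2
    _ = (2/γ)^2 * ∑' q : ℕ × ℕ, (u q)^2 * ((q.1:ℝ)^2 + (q.2:ℝ)^2)^3 := tsum_mul_left
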